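/- Under the interference-alignment hypotheses, let X ⊆ {1,…,k} be a subset such that Σ_{i∈X} rowSpace(S_i) = 𝔽^l. If Ψ_1, …, Ψ_r are l × l matrices over 𝔽 such that rowSpace(S_i · Ψ_u) ⊆ rowSpace(S_i) for every i ∈ X and every u ∈ {1,…,r}, and Ψ_1 + Σ_{u=2}^r Ψ_u · (Σ_{j∈X} C_{u,j}) = 0 (zero matrix), then Ψ_u = 0 for every u ∈ {1,…,r}. -/

import Mathlib

theorem stmt_7 {𝔽 : Type*} [Field 𝔽] (k r l : ℕ)
    (hk : 0 < k) (hr : 2 ≤ r) (hl : 0 < l) (hrl : r ∣ l)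
    (S : Fin k → Matrix (Fin (l / r)) (Fin l) 𝔽)
    (C : Fin r → Fin k → Matrix (Fin l) (Fin l) 𝔽)
    (hCinv : ∀ u j, IsUnit (C u j))
    (hC1 : ∀ j, C ⟨0, by omega⟩ j = 1)
    (hIA1 : ∀ (i j : Fin k), j ≠ i → ∀ u : Fin r,
      Submodule.span 𝔽 (Set.range (S i * C u j)) = Submodule.span 𝔽 (Set.range (S i)))
    (hIA2 : ∀ i : Fin k, iSupIndep
      fun u : Fin r => Submodule.span 𝔽 (Set.range (S i * C u i)))
    (hIA3 : ∀ i : Fin k,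
      (⨆ u : Fin r, Submodule.span 𝔽 (Set.range (S i * C u i))) = ⊤)
    (X : Finset (Fin k))
    (hX : (⨆ i ∈ X, Submodule.span 𝔽 (Set.range (S i))) = ⊤)
    (Ψ : Fin r → Matrix (Fin l) (Fin l) 𝔽)
    (hΨ : ∀ i ∈ X, ∀ u : Fin r,
      Submodule.span 𝔽 (Set.range (S i * Ψ u)) ≤ Submodule.span 𝔽 (Set.range (S i)))
    (hsum : Ψ ⟨0, by omega⟩ +
      ∑ u ∈ Finset.univ.filter (fun u : Fin r => (u : ℕ) ≠ 0),
        Ψ u * (∑ j ∈ X, C u j) = 0) :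
    ∀ u : Fin r, Ψ u = 0 := by
  have hr0 : 0 < r := by omega
  set u0 : Fin r := ⟨0, hr0⟩ with hu0def
  have hsum' : Ψ u0 + ∑ u ∈ Finset.univ.filter (fun u : Fin r => (u : ℕ) ≠ 0),
      Ψ u * (∑ j ∈ X, C u j) = 0 := hsum
  have hC1' : ∀ j, C u0 j = 1 := hC1
  -- helper lemmas
  have hrowmem : ∀ {m : ℕ} (A : Matrix (Fin m) (Fin l) 𝔽) (t : Fin m),
      A t ∈ Submodule.span 𝔽 (Set.range A) := fun A t => Submodule.subset_span ⟨t, rfl⟩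
  have hspan : ∀ {m : ℕ} (A : Matrix (Fin m) (Fin l) 𝔽) (B : Matrix (Fin l) (Fin l) 𝔽)
      (v : Fin l → 𝔽), v ∈ Submodule.span 𝔽 (Set.range A) →
      Matrix.vecMul v B ∈ Submodule.span 𝔽 (Set.range (A * B)) := by
    intro m A B v hv
    rw [show Set.range A = Set.range A.row from rfl, ← range_vecMulLinear] at hv
    rw [show Set.range (A * B) = Set.range (A * B).row from rfl, ← range_vecMulLinear]
    obtain ⟨w, rfl⟩ := hv
    exact ⟨w, by simp⟩
  have hrowmul : ∀ {m : ℕ} (A : Matrix (Fin m) (Fin l) 𝔽) (B : Matrix (Fin l) (Fin l) 𝔽)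
      (t : Fin m), (A * B) t = Matrix.vecMul (A t) B := by
    intro m A B t
    funext j
    simp [Matrix.mul_apply, Matrix.vecMul, dotProduct]
  have hrowsum : ∀ {ι : Type} (s : Finset ι) (g : ι → Matrix (Fin (l / r)) (Fin l) 𝔽)
      (t : Fin (l / r)), (∑ x ∈ s, g x) t = ∑ x ∈ s, g x t := by
    intro ι s g t
    funext j
    simp [Matrix.sum_apply, Finset.sum_apply]
  have hindep : ∀ (p : Fin r → Submodule 𝔽 (Fin l → 𝔽)), iSupIndep p →
      ∀ v : Fin r → (Fin l → 𝔽), (∀ w, v w ∈ p w) → ∑ w, v w = 0 → ∀ w, v w = 0 := by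
    intro p hp v hv hz w
    have h1 : v w + ∑ w' ∈ Finset.univ.erase w, v w' = 0 := by
      rw [Finset.add_sum_erase _ _ (Finset.mem_univ w)]; exact hz
    have h3 : v w ∈ ⨆ (j) (_ : j ≠ w), p j := by
      rw [eq_neg_of_add_eq_zero_left h1]
      exact neg_mem (Submodule.sum_mem _ fun w' hw' =>
        Submodule.mem_iSup_of_mem w'
          (Submodule.mem_iSup_of_mem (Finset.mem_erase.mp hw').1 (hv w')))
    exact Submodule.disjoint_def.mp (hp w) _ (hv w) h3
  have hE : Finset.univ.filter (fun u : Fin r => (u : ℕ) ≠ 0) = Finset.univ.erase u0 := by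
    ext w
    simp [Finset.mem_erase, Fin.ext_iff, and_comm, hu0def]
  -- Step 1
  have step1 : ∀ i ∈ X, ∀ u : Fin r, u ≠ u0 → S i * Ψ u = 0 := by
    intro i hi u hu
    -- matrix-level consequence of hsum
    have h1 : ∀ w : Fin r, S i * (Ψ w * (∑ j ∈ X, C w j)) =
        S i * Ψ w * C w i + ∑ j ∈ X.erase i, S i * Ψ w * C w j := by
      intro w
      rw [← Matrix.mul_assoc, Matrix.mul_sum, ← Finset.add_sum_erase _ _ hi]
    have Hm : S i * Ψ u0 + (∑ w ∈ Finset.univ.erase u0, S i * Ψ w * C w i +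
        ∑ w ∈ Finset.univ.erase u0, ∑ j ∈ X.erase i, S i * Ψ w * C w j) = 0 := by
      have h0 := congrArg (fun M => S i * M) hsum'
      simp only [Matrix.mul_zero, Matrix.mul_add, Matrix.mul_sum, hE,
        ← Matrix.mul_assoc] at h0
      rw [Finset.sum_congr rfl (fun w _ =>
        (Finset.add_sum_erase X (fun j => S i * Ψ w * C w j) hi).symm),
        Finset.sum_add_distrib] at h0
      exact h0
    have key : ∀ t, (S i * Ψ u * C u i) t = 0 := by
      intro t
      set f : Fin r → (Fin l → 𝔽) := fun w =>
        if w = u0 then (S i * Ψ u0) t +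
          (∑ w' ∈ Finset.univ.erase u0, ∑ j ∈ X.erase i, S i * Ψ w' * C w' j) t
        else (S i * Ψ w * C w i) t with hf
      have hmem : ∀ w, f w ∈ Submodule.span 𝔽 (Set.range (S i * C w i)) := by
        intro w
        by_cases hw : w = u0
        · rw [hw]
          simp only [hf, if_pos rfl]
          have hCC : S i * C u0 i = S i := by rw [hC1']; exact Matrix.mul_one _
          rw [hCC]
          apply Submodule.add_mem
          · exact hΨ i hi u0 (hrowmem _ t)
          · rw [hrowsum]
            apply Submodule.sum_mem
            intro w' _
            rw [hrowsum]
            apply Submodule.sum_mem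
            intro j hj
            have hjne : j ≠ i := (Finset.mem_erase.mp hj).1
            have hv : (S i * Ψ w') t ∈ Submodule.span 𝔽 (Set.range (S i)) :=
              hΨ i hi w' (hrowmem _ t)
            have := hspan (S i) (C w' j) _ hv
            rw [hIA1 i j hjne w'] at this
            rwa [hrowmul]
        · simp only [hf, if_neg hw]
          rw [hrowmul]
          exact hspan (S i) (C w i) _ (hΨ i hi w (hrowmem _ t))
      have hzero : ∑ w, f w = 0 := by
        rw [← Finset.add_sum_erase _ f (Finset.mem_univ u0)]
        have h2 : ∑ w ∈ Finset.univ.erase u0, f w =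
            ∑ w ∈ Finset.univ.erase u0, (S i * Ψ w * C w i) t :=
          Finset.sum_congr rfl fun w hw => by
            simp only [hf, if_neg (Finset.mem_erase.mp hw).1]
        rw [h2]
        simp only [hf, if_pos rfl]
        have Hrow := congrFun Hm t
        rw [show ((0 : Matrix (Fin (l / r)) (Fin l) 𝔽)) t = 0 from rfl] at Hrow
        rw [show (S i * Ψ u0 + (∑ w ∈ Finset.univ.erase u0, S i * Ψ w * C w i +
            ∑ w ∈ Finset.univ.erase u0, ∑ j ∈ X.erase i, S i * Ψ w * C w j)) t =
            (S i * Ψ u0) t + ((∑ w ∈ Finset.univ.erase u0, S i * Ψ w * C w i) t +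
            (∑ w ∈ Finset.univ.erase u0, ∑ j ∈ X.erase i, S i * Ψ w * C w j) t) from rfl]
          at Hrow
        rw [hrowsum] at Hrow
        linear_combination Hrow
      have := hindep _ (hIA2 i) f hmem hzero u
      simpa only [hf, if_neg hu] using this
    have key2 : S i * Ψ u * C u i = 0 := by
      ext t j
      exact congrFun (key t) j
    have hdet : IsUnit (C u i).det := (Matrix.isUnit_iff_isUnit_det _).mp (hCinv u i)
    calc S i * Ψ u = S i * Ψ u * (C u i * (C u i)⁻¹) := by
          rw [Matrix.mul_nonsing_inv _ hdet, Matrix.mul_one]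
      _ = 0 := by rw [← Matrix.mul_assoc, key2, Matrix.zero_mul]
  -- Step 2
  have step2 : ∀ u : Fin r, u ≠ u0 → Ψ u = 0 := by
    intro u hu
    have hker : ∀ v : Fin l → 𝔽, Matrix.vecMul v (Ψ u) = 0 := by
      intro v
      have hv : v ∈ (⨆ i ∈ X, Submodule.span 𝔽 (Set.range (S i))) := by
        rw [hX]; trivial
      have hle : (⨆ i ∈ X, Submodule.span 𝔽 (Set.range (S i))) ≤
          LinearMap.ker (Ψ u).vecMulLinear := by
        refine iSup_le fun i => iSup_le fun hi => ?_
        rw [Submodule.span_le]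
        rintro _ ⟨t, rfl⟩
        simp only [SetLike.mem_coe, LinearMap.mem_ker, Matrix.vecMulLinear_apply]
        rw [← hrowmul, step1 i hi u hu]
        rfl
      simpa using hle hv
    ext a b
    simpa [Matrix.single_one_vecMul] using congrFun (hker (Pi.single a 1)) b
  have hz0 : Ψ u0 = 0 := by
    have hzsum : ∑ u ∈ Finset.univ.filter (fun u : Fin r => (u : ℕ) ≠ 0),
        Ψ u * (∑ j ∈ X, C u j) = 0 := by
      apply Finset.sum_eq_zero
      intro w hw
      have hwne : w ≠ u0 := by
        simp only [Finset.mem_filter] at hw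
        simpa [Fin.ext_iff] using hw.2
      rw [step2 w hwne, Matrix.zero_mul]
    rw [hzsum, add_zero] at hsum'
    exact hsum'
  intro u
  by_cases h : u = u0
  · rw [h]; exact hz0
  · exact step2 u h
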